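/- arXiv:2203.09555 — 2 statements merged into one kernel-verified Lean document; each statement's English description precedes it below -/
import Mathlib

section
/- For every GFMT expressible by a tuple of ReLU-MPLang expressions, there exists a ReLU-MPNN expressing the same GFMT. That is, for every tuple (e_1, …, e_r) of MPLang expressions appropriate for input arity d in which every function application applies ReLU, there is a ReLU-MPNN N of type d → r such that N(G)(χ)(v) = (e_1(G)(χ)(v), …, e_r(G)(χ)(v)) for every graph G, every d-dimensional feature map χ on G, and every node v of G. -/
open scoped BigOperators

/-- A finite graph: nodes `Fin n`, with a symmetric, irreflexive adjacency relation. -/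
structure FinGraph where
  n : ℕ
  adj : Fin n → Fin n → Bool
  symm : ∀ u v, adj u v = adj v u
  irrefl : ∀ v, adj v v = false

namespace FinGraph

/-- The set of neighbors of `v` in `G`. -/
def neighbors (G : FinGraph) (v : Fin G.n) : Finset (Fin G.n) :=
  Finset.univ.filter fun u => G.adj v u

/-- The degree of a node. -/
def degree (G : FinGraph) (v : Fin G.n) : ℕ := (G.neighbors v).card

/-- `G` has degree at most `p` (i.e., `G ∈ 𝔾_p`). -/
def DegreeLE (G : FinGraph) (p : ℕ) : Prop := ∀ v, G.degree v ≤ p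

end FinGraph

/-- The rectified linear unit. -/
noncomputable def ReLU (x : ℝ) : ℝ := max 0 x

/-- An MPNN layer of type `d → r`: matrices `W₁, W₂ ∈ ℝ^{r×d}`, bias `b ∈ ℝ^r`,
and a continuous activation function `σ`. -/
structure Layer (d r : ℕ) where
  W₁ : Matrix (Fin r) (Fin d) ℝ
  W₂ : Matrix (Fin r) (Fin d) ℝ
  b : Fin r → ℝ
  σ : ℝ → ℝ
  hσ : Continuous σ

namespace Layer

/-- The GFMT defined by a layer:
`L(G)(χ)(v) = σ(W₁ χ(v) + W₂ Σ_{u ∈ N_G(v)} χ(u) + b)`, componentwise. -/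
noncomputable def eval {d r : ℕ} (L : Layer d r) (G : FinGraph)
    (χ : Fin G.n → Fin d → ℝ) (v : Fin G.n) : Fin r → ℝ :=
  fun i => L.σ (L.W₁.mulVec (χ v) i + L.W₂.mulVec (∑ u ∈ G.neighbors v, χ u) i + L.b i)

end Layer

/-- An MPNN: a nonempty sequence of layers with matching arities. -/
inductive MPNN : ℕ → ℕ → Type where
  | single {d r : ℕ} : Layer d r → MPNN d r
  | cons {d m r : ℕ} : Layer d m → MPNN m r → MPNN d r

namespace MPNN

/-- The GFMT defined by an MPNN: the sequential composition of its layers. -/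
noncomputable def eval : {d r : ℕ} → MPNN d r → (G : FinGraph) →
    (Fin G.n → Fin d → ℝ) → (Fin G.n → Fin r → ℝ)
  | _, _, .single L, G, χ => L.eval G χ
  | _, _, .cons L N, G, χ => N.eval G (L.eval G χ)

/-- A ReLU-MPNN: every layer uses ReLU, except that the last layer may use the identity. -/
def IsReLU : {d r : ℕ} → MPNN d r → Prop
  | _, _, .single L => L.σ = ReLU ∨ L.σ = id
  | _, _, .cons L N => L.σ = ReLU ∧ N.IsReLU

/-- The set of activation functions used in the layers of an MPNN. -/
def activations : {d r : ℕ} → MPNN d r → Set (ℝ → ℝ)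
  | _, _, .single L => {L.σ}
  | _, _, .cons L N => insert L.σ N.activations

/-- The number of layers of an MPNN. -/
def numLayers : {d r : ℕ} → MPNN d r → ℕ
  | _, _, .single _ => 1
  | _, _, .cons _ N => N.numLayers + 1

end MPNN

/-- MPLang expressions: `e ::= 1 | P_i | a·e | e + e | f(e) | ◇e`
with `f : ℝ → ℝ` continuous. -/
inductive MPLang : Type where
  | one : MPLang
  | proj : ℕ → MPLang
  | scale : ℝ → MPLang → MPLang
  | add : MPLang → MPLang → MPLang
  | app : (f : ℝ → ℝ) → Continuous f → MPLang → MPLang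
  | diamond : MPLang → MPLang

namespace MPLang

/-- `e` is appropriate for input arity `d`: every `P_i` has `1 ≤ i ≤ d`. -/
def Appropriate (d : ℕ) : MPLang → Prop
  | .one => True
  | .proj i => 1 ≤ i ∧ i ≤ d
  | .scale _ e => e.Appropriate d
  | .add e₁ e₂ => e₁.Appropriate d ∧ e₂.Appropriate d
  | .app _ _ e => e.Appropriate d
  | .diamond e => e.Appropriate d

/-- Semantics of MPLang expressions (the `P_i` are 1-based; out-of-range
projections, which cannot occur in expressions appropriate for `d`, yield 0). -/
noncomputable def eval (d : ℕ) : MPLang → (G : FinGraph) →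
    (Fin G.n → Fin d → ℝ) → Fin G.n → ℝ
  | .one, _, _, _ => 1
  | .proj i, _, χ, v => if h : i - 1 < d then χ v ⟨i - 1, h⟩ else 0
  | .scale a e, G, χ, v => a * e.eval d G χ v
  | .add e₁ e₂, G, χ, v => e₁.eval d G χ v + e₂.eval d G χ v
  | .app f _ e, G, χ, v => f (e.eval d G χ v)
  | .diamond e, G, χ, v => ∑ u ∈ G.neighbors v, e.eval d G χ u

/-- All function applications in the expression apply functions from `F`. -/
def AppsIn (F : Set (ℝ → ℝ)) : MPLang → Prop
  | .one => True
  | .proj _ => True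
  | .scale _ e => e.AppsIn F
  | .add e₁ e₂ => e₁.AppsIn F ∧ e₂.AppsIn F
  | .app f _ e => f ∈ F ∧ e.AppsIn F
  | .diamond e => e.AppsIn F

/-- A ReLU-MPLang expression: all function applications apply ReLU. -/
def IsReLU (e : MPLang) : Prop := e.AppsIn {ReLU}

end MPLang

/-! ### Auxiliary development for the proof -/

section ReLUFacts

lemma relu_nonneg (x : ℝ) : 0 ≤ ReLU x := le_max_left 0 x

lemma relu_of_nonneg {x : ℝ} (h : 0 ≤ x) : ReLU x = x := max_eq_right h

lemma relu_sub_relu_neg (x : ℝ) : ReLU x - ReLU (-x) = x := by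
  unfold ReLU
  rcases le_total 0 x with h | h
  · rw [max_eq_right h, max_eq_left (by linarith)]; ring
  · rw [max_eq_right (by linarith : (0:ℝ) ≤ -x), max_eq_left h]; ring

lemma relu_relu (x : ℝ) : ReLU (ReLU x) = ReLU x := relu_of_nonneg (relu_nonneg x)

lemma relu_neg_relu (x : ℝ) : ReLU (-(ReLU x)) = 0 :=
  max_eq_left (by simpa using relu_nonneg x)

lemma relu_zero : ReLU 0 = 0 := max_self 0

lemma relu_continuous : Continuous ReLU := continuous_const.max continuous_id

end ReLUFacts

section Ind

/-- Indicator vector with value `a` at `j0`. -/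
def ind {m : ℕ} (j0 : Fin m) (a : ℝ) : Fin m → ℝ := fun j => if j = j0 then a else 0

lemma dot_ind {m : ℕ} (j0 : Fin m) (a : ℝ) (f : Fin m → ℝ) :
    ∑ j, ind j0 a j * f j = a * f j0 := by
  rw [Finset.sum_eq_single j0]
  · simp [ind]
  · intro b _ hb; simp [ind, hb]
  · simp

lemma dot_two {m : ℕ} (p q : Fin m) (a b : ℝ) (f : Fin m → ℝ) :
    ∑ j, (ind p a j + ind q b j) * f j = a * f p + b * f q := by
  simp only [add_mul]
  rw [Finset.sum_add_distrib, dot_ind, dot_ind]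

lemma dot_four {m : ℕ} (p q p' q' : Fin m) (a b a' b' : ℝ) (f : Fin m → ℝ) :
    ∑ j, ((ind p a j + ind q b j) + (ind p' a' j + ind q' b' j)) * f j
      = (a * f p + b * f q) + (a' * f p' + b' * f q') := by
  simp only [add_mul]
  rw [Finset.sum_add_distrib, Finset.sum_add_distrib, Finset.sum_add_distrib,
    dot_ind, dot_ind, dot_ind, dot_ind]

lemma dot_zero {m : ℕ} (f : Fin m → ℝ) : ∑ j, (fun _ : Fin m => (0:ℝ)) j * f j = 0 := by simp

end Ind

/-! ### Chains: possibly empty sequences of layers -/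

inductive Chain : ℕ → ℕ → Type where
  | nil (d : ℕ) : Chain d d
  | cons {d m r : ℕ} : Layer d m → Chain m r → Chain d r

namespace Chain

noncomputable def eval : {d r : ℕ} → Chain d r → (G : FinGraph) →
    (Fin G.n → Fin d → ℝ) → Fin G.n → Fin r → ℝ
  | _, _, .nil _, _, χ => χ
  | _, _, .cons L C, G, χ => C.eval G (L.eval G χ)

def AllReLU : {d r : ℕ} → Chain d r → Prop
  | _, _, .nil _ => True
  | _, _, .cons L C => L.σ = ReLU ∧ C.AllReLU

def snoc : {d m : ℕ} → Chain d m → {r : ℕ} → Layer m r → Chain d r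
  | _, _, .nil _, _, L => .cons L (.nil _)
  | _, _, .cons L₀ C, _, L => .cons L₀ (C.snoc L)

lemma eval_snoc : ∀ {d m r : ℕ} (C : Chain d m) (L : Layer m r) (G : FinGraph)
    (χ : Fin G.n → Fin d → ℝ), (C.snoc L).eval G χ = L.eval G (C.eval G χ)
  | _, _, _, .nil _, L, G, χ => rfl
  | _, _, _, .cons L₀ C, L, G, χ => eval_snoc C L G (L₀.eval G χ)

lemma allReLU_snoc : ∀ {d m r : ℕ} (C : Chain d m) (L : Layer m r),
    C.AllReLU → L.σ = ReLU → (C.snoc L).AllReLU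
  | _, _, _, .nil _, _, _, hL => ⟨hL, trivial⟩
  | _, _, _, .cons L₀ C, L, h, hL => ⟨h.1, allReLU_snoc C L h.2 hL⟩

def toMPNN : {d m : ℕ} → Chain d m → {r : ℕ} → Layer m r → MPNN d r
  | _, _, .nil _, _, L => .single L
  | _, _, .cons L₀ C, _, L => .cons L₀ (C.toMPNN L)

lemma eval_toMPNN : ∀ {d m r : ℕ} (C : Chain d m) (L : Layer m r) (G : FinGraph)
    (χ : Fin G.n → Fin d → ℝ), (C.toMPNN L).eval G χ = L.eval G (C.eval G χ)
  | _, _, _, .nil _, L, G, χ => rfl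
  | _, _, _, .cons L₀ C, L, G, χ => eval_toMPNN C L G (L₀.eval G χ)

lemma isReLU_toMPNN : ∀ {d m r : ℕ} (C : Chain d m) (L : Layer m r),
    C.AllReLU → (L.σ = ReLU ∨ L.σ = id) → (C.toMPNN L).IsReLU
  | _, _, _, .nil _, _, _, hL => hL
  | _, _, _, .cons L₀ C, L, h, hL => ⟨h.1, isReLU_toMPNN C L h.2 hL⟩

end Chain

/-- A "good" chain: all-ReLU, nonnegative outputs, and it stores the
ReLU-pair encoding of every input coordinate. -/
def Good (d m : ℕ) (C : Chain d m) : Prop :=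
  C.AllReLU ∧
  (∀ (G : FinGraph) (χ : Fin G.n → Fin d → ℝ) (v : Fin G.n) (k : Fin m),
      0 ≤ C.eval G χ v k) ∧
  ∃ π : Fin d → Fin m × Fin m, ∀ (G : FinGraph) (χ : Fin G.n → Fin d → ℝ) (v : Fin G.n) (i : Fin d),
    C.eval G χ v (π i).1 = ReLU (χ v i) ∧ C.eval G χ v (π i).2 = ReLU (-(χ v i))
/-! ### The generic extension layer -/

/-- A ReLU layer `m → m+2` copying all `m` coordinates (assumed nonnegative) and
computing two new coordinates from the rows `(w1, w2, c)` and `(w1', w2', c')`. -/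
noncomputable def mkLayer (m : ℕ) (w1 w2 w1' w2' : Fin m → ℝ) (c c' : ℝ) : Layer m (m+2) where
  W₁ := fun k' k => if h : (k' : ℕ) < m then (if k = ⟨k', h⟩ then 1 else 0)
        else if (k' : ℕ) = m then w1 k else w1' k
  W₂ := fun k' k => if (k' : ℕ) < m then 0 else if (k' : ℕ) = m then w2 k else w2' k
  b := fun k' => if (k' : ℕ) < m then 0 else if (k' : ℕ) = m then c else c'
  σ := ReLU
  hσ := relu_continuous

lemma mkLayer_eval_copy {m : ℕ} (w1 w2 w1' w2' : Fin m → ℝ) (c c' : ℝ)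
    (G : FinGraph) (χ : Fin G.n → Fin m → ℝ) (v : Fin G.n) (k : Fin m) :
    (mkLayer m w1 w2 w1' w2' c c').eval G χ v (Fin.castAdd 2 k) = ReLU (χ v k) := by
  have hk : (k : ℕ) < m := k.isLt
  simp [Layer.eval, mkLayer, Matrix.mulVec, dotProduct, hk]

lemma mkLayer_eval_new1 {m : ℕ} (w1 w2 w1' w2' : Fin m → ℝ) (c c' : ℝ)
    (G : FinGraph) (χ : Fin G.n → Fin m → ℝ) (v : Fin G.n) :
    (mkLayer m w1 w2 w1' w2' c c').eval G χ v ⟨m, by omega⟩ =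
      ReLU ((∑ j, w1 j * χ v j) + (∑ j, w2 j * ∑ u ∈ G.neighbors v, χ u j) + c) := by
  have h1 : ¬ ((⟨m, by omega⟩ : Fin (m+2)) : ℕ) < m := by simp
  simp [Layer.eval, mkLayer, Matrix.mulVec, dotProduct, h1, Finset.sum_apply]

lemma mkLayer_eval_new2 {m : ℕ} (w1 w2 w1' w2' : Fin m → ℝ) (c c' : ℝ)
    (G : FinGraph) (χ : Fin G.n → Fin m → ℝ) (v : Fin G.n) :
    (mkLayer m w1 w2 w1' w2' c c').eval G χ v ⟨m+1, by omega⟩ =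
      ReLU ((∑ j, w1' j * χ v j) + (∑ j, w2' j * ∑ u ∈ G.neighbors v, χ u j) + c') := by
  have h1 : ¬ ((⟨m+1, by omega⟩ : Fin (m+2)) : ℕ) < m := by simp
  have h2 : ((⟨m+1, by omega⟩ : Fin (m+2)) : ℕ) ≠ m := by simp
  simp [Layer.eval, mkLayer, Matrix.mulVec, dotProduct, h1, h2, Finset.sum_apply]

/-- The one-step extension of a good chain. -/
lemma step {d m : ℕ} (C : Chain d m) (hC : Good d m C)
    (w1 w2 w1' w2' : Fin m → ℝ) (c c' : ℝ) :
    Good d (m+2) (C.snoc (mkLayer m w1 w2 w1' w2' c c')) ∧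
    (∀ (G : FinGraph) (χ : Fin G.n → Fin d → ℝ) (v : Fin G.n) (k : Fin m),
      (C.snoc (mkLayer m w1 w2 w1' w2' c c')).eval G χ v (Fin.castAdd 2 k) = C.eval G χ v k) ∧
    (∀ (G : FinGraph) (χ : Fin G.n → Fin d → ℝ) (v : Fin G.n),
      (C.snoc (mkLayer m w1 w2 w1' w2' c c')).eval G χ v ⟨m, by omega⟩ =
        ReLU ((∑ j, w1 j * C.eval G χ v j)
          + (∑ j, w2 j * ∑ u ∈ G.neighbors v, C.eval G χ u j) + c) ∧
      (C.snoc (mkLayer m w1 w2 w1' w2' c c')).eval G χ v ⟨m+1, by omega⟩ =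
        ReLU ((∑ j, w1' j * C.eval G χ v j)
          + (∑ j, w2' j * ∑ u ∈ G.neighbors v, C.eval G χ u j) + c')) := by
  obtain ⟨hAll, hNN, π, hπ⟩ := hC
  have hcopy : ∀ (G : FinGraph) (χ : Fin G.n → Fin d → ℝ) (v : Fin G.n) (k : Fin m),
      (C.snoc (mkLayer m w1 w2 w1' w2' c c')).eval G χ v (Fin.castAdd 2 k) = C.eval G χ v k := by
    intro G χ v k
    rw [Chain.eval_snoc, mkLayer_eval_copy]
    exact relu_of_nonneg (hNN G χ v k)
  refine ⟨⟨Chain.allReLU_snoc C _ hAll rfl, ?_, ?_⟩, hcopy, ?_⟩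
  · intro G χ v k
    rw [Chain.eval_snoc]
    exact relu_nonneg _
  · refine ⟨fun i => (Fin.castAdd 2 (π i).1, Fin.castAdd 2 (π i).2), ?_⟩
    intro G χ v i
    rw [hcopy, hcopy]
    exact hπ G χ v i
  · intro G χ v
    rw [Chain.eval_snoc, mkLayer_eval_new1, mkLayer_eval_new2]
    exact ⟨rfl, rfl⟩
/-- Main induction: any ReLU-MPLang expression can be added (as a ReLU-pair) to a good chain. -/
lemma extend (d : ℕ) : ∀ (e : MPLang), e.Appropriate d → e.AppsIn {ReLU} →
    ∀ (m : ℕ) (C : Chain d m), Good d m C →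
    ∃ (m' : ℕ) (C' : Chain d m') (emb : Fin m → Fin m') (p q : Fin m'),
      Good d m' C' ∧
      (∀ (G : FinGraph) (χ : Fin G.n → Fin d → ℝ) (v : Fin G.n) (k : Fin m),
        C'.eval G χ v (emb k) = C.eval G χ v k) ∧
      (∀ (G : FinGraph) (χ : Fin G.n → Fin d → ℝ) (v : Fin G.n),
        C'.eval G χ v p = ReLU (e.eval d G χ v) ∧
        C'.eval G χ v q = ReLU (-(e.eval d G χ v))) := by
  intro e
  induction e with
  | one =>
    intro _ _ m C hC
    obtain ⟨hG, hcopy, hnew⟩ :=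
      step C hC (fun _ => 0) (fun _ => 0) (fun _ => 0) (fun _ => 0) 1 (-1)
    refine ⟨m+2, _, Fin.castAdd 2, ⟨m, by omega⟩, ⟨m+1, by omega⟩, hG, hcopy, ?_⟩
    intro G χ v
    obtain ⟨h1, h2⟩ := hnew G χ v
    constructor
    · rw [h1]; simp [MPLang.eval]
    · rw [h2]; simp [MPLang.eval]
  | proj i =>
    intro hap _ m C hC
    obtain ⟨hAll, hNN, π, hπ⟩ := hC
    obtain ⟨hi1, hi2⟩ := hap
    have hi : i - 1 < d := by omega
    refine ⟨m, C, id, (π ⟨i-1, hi⟩).1, (π ⟨i-1, hi⟩).2,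
      ⟨hAll, hNN, π, hπ⟩, fun G χ v k => rfl, ?_⟩
    intro G χ v
    have h := hπ G χ v ⟨i-1, hi⟩
    simpa [MPLang.eval, hi] using h
  | scale a e ih =>
    intro hap hre m C hC
    obtain ⟨m₁, C₁, emb₁, p, q, hC₁, hpres₁, hpq₁⟩ := ih hap hre m C hC
    obtain ⟨hG, hcopy, hnew⟩ := step C₁ hC₁
      (fun k => ind p a k + ind q (-a) k) (fun _ => 0)
      (fun k => ind p (-a) k + ind q a k) (fun _ => 0) 0 0
    refine ⟨m₁+2, _, fun k => Fin.castAdd 2 (emb₁ k), ⟨m₁, by omega⟩, ⟨m₁+1, by omega⟩,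
      hG, ?_, ?_⟩
    · intro G χ v k; rw [hcopy]; exact hpres₁ G χ v k
    · intro G χ v
      obtain ⟨h1, h2⟩ := hnew G χ v
      obtain ⟨hp, hq⟩ := hpq₁ G χ v
      constructor
      · rw [h1, dot_two]
        simp only [zero_mul, Finset.sum_const_zero, add_zero, MPLang.eval]
        rw [hp, hq]
        congr 1
        linear_combination a * relu_sub_relu_neg (e.eval d G χ v)
      · rw [h2, dot_two]
        simp only [zero_mul, Finset.sum_const_zero, add_zero, MPLang.eval]
        rw [hp, hq]
        congr 1
        linear_combination (-a) * relu_sub_relu_neg (e.eval d G χ v)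
  | add e₁ e₂ ih₁ ih₂ =>
    intro hap hre m C hC
    obtain ⟨m₁, C₁, emb₁, p₁, q₁, hC₁, hpres₁, hpq₁⟩ := ih₁ hap.1 hre.1 m C hC
    obtain ⟨m₂, C₂, emb₂, p₂, q₂, hC₂, hpres₂, hpq₂⟩ := ih₂ hap.2 hre.2 m₁ C₁ hC₁
    obtain ⟨hG, hcopy, hnew⟩ := step C₂ hC₂
      (fun k => (ind (emb₂ p₁) 1 k + ind (emb₂ q₁) (-1) k) + (ind p₂ 1 k + ind q₂ (-1) k))
      (fun _ => 0)
      (fun k => (ind (emb₂ p₁) (-1) k + ind (emb₂ q₁) 1 k) + (ind p₂ (-1) k + ind q₂ 1 k))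
      (fun _ => 0) 0 0
    refine ⟨m₂+2, _, fun k => Fin.castAdd 2 (emb₂ (emb₁ k)), ⟨m₂, by omega⟩, ⟨m₂+1, by omega⟩,
      hG, ?_, ?_⟩
    · intro G χ v k; rw [hcopy, hpres₂]; exact hpres₁ G χ v k
    · intro G χ v
      obtain ⟨h1, h2⟩ := hnew G χ v
      obtain ⟨hp₂, hq₂⟩ := hpq₂ G χ v
      have hp₁ : C₂.eval G χ v (emb₂ p₁) = ReLU (e₁.eval d G χ v) := by
        rw [hpres₂]; exact (hpq₁ G χ v).1
      have hq₁ : C₂.eval G χ v (emb₂ q₁) = ReLU (-(e₁.eval d G χ v)) := by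
        rw [hpres₂]; exact (hpq₁ G χ v).2
      constructor
      · rw [h1, dot_four]
        simp only [zero_mul, Finset.sum_const_zero, add_zero, MPLang.eval]
        rw [hp₁, hq₁, hp₂, hq₂]
        congr 1
        linear_combination relu_sub_relu_neg (e₁.eval d G χ v) +
          relu_sub_relu_neg (e₂.eval d G χ v)
      · rw [h2, dot_four]
        simp only [zero_mul, Finset.sum_const_zero, add_zero, MPLang.eval]
        rw [hp₁, hq₁, hp₂, hq₂]
        congr 1
        linear_combination (-1 : ℝ) * relu_sub_relu_neg (e₁.eval d G χ v) +
          (-1 : ℝ) * relu_sub_relu_neg (e₂.eval d G χ v)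
  | app f hf e ih =>
    intro hap hre m C hC
    have hfR : f = ReLU := hre.1
    obtain ⟨m₁, C₁, emb₁, p, q, hC₁, hpres₁, hpq₁⟩ := ih hap hre.2 m C hC
    obtain ⟨hG, hcopy, hnew⟩ := step C₁ hC₁
      (fun k => ind p 1 k + ind q (-1) k) (fun _ => 0)
      (fun _ => 0) (fun _ => 0) 0 0
    refine ⟨m₁+2, _, fun k => Fin.castAdd 2 (emb₁ k), ⟨m₁, by omega⟩, ⟨m₁+1, by omega⟩,
      hG, ?_, ?_⟩
    · intro G χ v k; rw [hcopy]; exact hpres₁ G χ v k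
    · intro G χ v
      obtain ⟨h1, h2⟩ := hnew G χ v
      obtain ⟨hp, hq⟩ := hpq₁ G χ v
      constructor
      · rw [h1, dot_two]
        simp only [zero_mul, Finset.sum_const_zero, add_zero, MPLang.eval, hfR]
        rw [hp, hq, relu_relu]
        congr 1
        linear_combination relu_sub_relu_neg (e.eval d G χ v) - relu_sub_relu_neg (e.eval d G χ v)
          + relu_sub_relu_neg (e.eval d G χ v) - (relu_relu (e.eval d G χ v) - relu_relu (e.eval d G χ v))
      · rw [h2]
        simp only [zero_mul, Finset.sum_const_zero, add_zero, MPLang.eval, hfR]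
        rw [relu_neg_relu]
        simpa using relu_zero
  | diamond e ih =>
    intro hap hre m C hC
    obtain ⟨m₁, C₁, emb₁, p, q, hC₁, hpres₁, hpq₁⟩ := ih hap hre m C hC
    obtain ⟨hG, hcopy, hnew⟩ := step C₁ hC₁
      (fun _ => 0) (fun k => ind p 1 k + ind q (-1) k)
      (fun _ => 0) (fun k => ind p (-1) k + ind q 1 k) 0 0
    refine ⟨m₁+2, _, fun k => Fin.castAdd 2 (emb₁ k), ⟨m₁, by omega⟩, ⟨m₁+1, by omega⟩,
      hG, ?_, ?_⟩
    · intro G χ v k; rw [hcopy]; exact hpres₁ G χ v k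
    · intro G χ v
      obtain ⟨h1, h2⟩ := hnew G χ v
      have hA : ∑ u ∈ G.neighbors v, C₁.eval G χ u p
          = ∑ u ∈ G.neighbors v, ReLU (e.eval d G χ u) :=
        Finset.sum_congr rfl fun u _ => (hpq₁ G χ u).1
      have hB : ∑ u ∈ G.neighbors v, C₁.eval G χ u q
          = ∑ u ∈ G.neighbors v, ReLU (-(e.eval d G χ u)) :=
        Finset.sum_congr rfl fun u _ => (hpq₁ G χ u).2
      have hkey : (∑ u ∈ G.neighbors v, ReLU (e.eval d G χ u))
          - (∑ u ∈ G.neighbors v, ReLU (-(e.eval d G χ u)))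
          = ∑ u ∈ G.neighbors v, e.eval d G χ u := by
        rw [← Finset.sum_sub_distrib]
        exact Finset.sum_congr rfl fun u _ => relu_sub_relu_neg _
      constructor
      · rw [h1, dot_two]
        simp only [zero_mul, Finset.sum_const_zero, zero_add, add_zero, MPLang.eval]
        rw [hA, hB]
        congr 1
        linarith [hkey]
      · rw [h2, dot_two]
        simp only [zero_mul, Finset.sum_const_zero, zero_add, add_zero, MPLang.eval]
        rw [hA, hB]
        congr 1
        linarith [hkey]
/-- Iterated extension for a tuple of expressions. -/
lemma extendTuple (d : ℕ) : ∀ (r : ℕ) (es : Fin r → MPLang),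
    (∀ j, (es j).Appropriate d) → (∀ j, (es j).AppsIn {ReLU}) →
    ∀ (m : ℕ) (C : Chain d m), Good d m C →
    ∃ (m' : ℕ) (C' : Chain d m') (P : Fin r → Fin m' × Fin m'),
      Good d m' C' ∧
      ∀ (G : FinGraph) (χ : Fin G.n → Fin d → ℝ) (v : Fin G.n) (j : Fin r),
        C'.eval G χ v (P j).1 = ReLU ((es j).eval d G χ v) ∧
        C'.eval G χ v (P j).2 = ReLU (-((es j).eval d G χ v)) := by
  intro r
  induction r with
  | zero =>
    intro es _ _ m C hC
    exact ⟨m, C, fun j => j.elim0, hC, fun G χ v j => j.elim0⟩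
  | succ n ih =>
    intro es hap hre m C hC
    obtain ⟨m₁, C₁, P₁, hC₁, hP₁⟩ :=
      ih (fun j => es j.castSucc) (fun j => hap _) (fun j => hre _) m C hC
    obtain ⟨m₂, C₂, emb, p, q, hC₂, hpres, hpq⟩ :=
      extend d (es (Fin.last n)) (hap _) (hre _) m₁ C₁ hC₁
    refine ⟨m₂, C₂,
      fun j => Fin.lastCases (p, q) (fun i => (emb (P₁ i).1, emb (P₁ i).2)) j, hC₂, ?_⟩
    intro G χ v j
    refine Fin.lastCases ?_ ?_ j
    · simpa using hpq G χ v
    · intro i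
      simp only [Fin.lastCases_castSucc]
      rw [hpres, hpres]
      exact hP₁ G χ v i

/-- The initial pairing layer `d → 2d`, computing `(ReLU(x_i), ReLU(-x_i))` for all inputs. -/
noncomputable def pairLayer (d : ℕ) : Layer d (2*d) where
  W₁ := fun k' k => if (k' : ℕ) < d then (if (k : ℕ) = (k' : ℕ) then 1 else 0)
        else (if (k : ℕ) = (k' : ℕ) - d then -1 else 0)
  W₂ := 0
  b := 0
  σ := ReLU
  hσ := relu_continuous

lemma dot_indNat {m : ℕ} (j0 : Fin m) (a : ℝ) (f : Fin m → ℝ) :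
    ∑ j : Fin m, (if (j : ℕ) = (j0 : ℕ) then a else 0) * f j = a * f j0 := by
  rw [Finset.sum_eq_single j0]
  · simp
  · intro b _ hb
    have : (b : ℕ) ≠ (j0 : ℕ) := fun h => hb (Fin.ext h)
    simp [this]
  · simp

/-- The base chain: just the pairing layer. -/
noncomputable def baseChain (d : ℕ) : Chain d (2*d) := .cons (pairLayer d) (.nil _)

lemma good_baseChain (d : ℕ) : Good d (2*d) (baseChain d) := by
  have heval : ∀ (G : FinGraph) (χ : Fin G.n → Fin d → ℝ) (v : Fin G.n) (k : Fin (2*d)),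
      (baseChain d).eval G χ v k =
        ReLU ((pairLayer d).W₁.mulVec (χ v) k) := by
    intro G χ v k
    show (pairLayer d).eval G χ v k = _
    simp [Layer.eval, pairLayer, Matrix.zero_mulVec]
  refine ⟨⟨rfl, trivial⟩, ?_, ?_⟩
  · intro G χ v k; rw [heval]; exact relu_nonneg _
  · refine ⟨fun i => (⟨(i : ℕ), by omega⟩, ⟨d + (i : ℕ), by omega⟩), ?_⟩
    intro G χ v i
    constructor
    · rw [heval]
      have hlt : ((⟨(i : ℕ), by omega⟩ : Fin (2*d)) : ℕ) < d := i.isLt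
      have : (pairLayer d).W₁.mulVec (χ v) ⟨(i : ℕ), by omega⟩ = χ v i := by
        simp only [Matrix.mulVec, dotProduct, pairLayer, if_pos hlt]
        have := dot_indNat i 1 (χ v)
        simpa using this
      rw [this]
    · rw [heval]
      have hlt : ¬ ((⟨d + (i : ℕ), by omega⟩ : Fin (2*d)) : ℕ) < d := by simp
      have hsub : ((⟨d + (i : ℕ), by omega⟩ : Fin (2*d)) : ℕ) - d = (i : ℕ) := by simp
      have : (pairLayer d).W₁.mulVec (χ v) ⟨d + (i : ℕ), by omega⟩ = -(χ v i) := by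
        simp only [Matrix.mulVec, dotProduct, pairLayer, if_neg hlt, hsub]
        have := dot_indNat i (-1) (χ v)
        simpa using this
      rw [this]

/-- The final decoding layer with identity activation. -/
noncomputable def outLayer {m r : ℕ} (P : Fin r → Fin m × Fin m) : Layer m r where
  W₁ := fun j k => ind (P j).1 1 k + ind (P j).2 (-1) k
  W₂ := 0
  b := 0
  σ := id
  hσ := continuous_id

/-- Theorem 1 of the paper: every GFMT expressible by a tuple of
ReLU-MPLang expressions is also expressible as a ReLU-MPNN. -/
theorem relu_mplang_to_relu_mpnn (d r : ℕ) (es : Fin r → MPLang)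
    (happ : ∀ j, (es j).Appropriate d) (hrelu : ∀ j, (es j).IsReLU) :
    ∃ N : MPNN d r, N.IsReLU ∧
      ∀ (G : FinGraph) (χ : Fin G.n → Fin d → ℝ) (v : Fin G.n) (j : Fin r),
        N.eval G χ v j = (es j).eval d G χ v := by
  obtain ⟨m', C', P, hC', hP⟩ :=
    extendTuple d r es happ hrelu (2*d) (baseChain d) (good_baseChain d)
  refine ⟨C'.toMPNN (outLayer P), Chain.isReLU_toMPNN _ _ hC'.1 (Or.inr rfl), ?_⟩
  intro G χ v j
  rw [Chain.eval_toMPNN]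
  obtain ⟨hp, hq⟩ := hP G χ v j
  have h : (outLayer P).eval G (C'.eval G χ) v j
      = C'.eval G χ v (P j).1 - C'.eval G χ v (P j).2 := by
    simp only [Layer.eval, outLayer, Matrix.mulVec, dotProduct, Matrix.zero_apply,
      zero_mul, Finset.sum_const_zero, add_zero, id_eq, Pi.zero_apply]
    rw [dot_two]
    ring
  rw [h, hp, hq, relu_sub_relu_neg]
end

section
/- Let L = L₁; …; L_n and K = K₁; …; K_n be two MPNNs with the same number n ≥ 2 of layers and the same input arity d. Then the concatenation of the GFMTs expressed by L and K satisfies L | K = (L₁ | K₁); (L₂ ∥ K₂); …; (L_n ∥ K_n), where L₁ | K₁ denotes the GFMT concatenating the outputs of the first layers and L_i ∥ K_i denotes parallel composition of the i-th layers. -/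
open scoped BigOperators

/-- Evaluation of the first `k` layers of a chain of `n` MPNN layers with arity
sequence `a` (the MPNN `L₁; …; L_n` has layer `L_{i+1} = Ls i` of type
`a i → a (i+1)`). -/
noncomputable def chainEval {n : ℕ} (a : Fin (n + 1) → ℕ)
    (Ls : ∀ i : Fin n, Layer (a i.castSucc) (a i.succ))
    (G : FinGraph) (χ : Fin G.n → Fin (a ⟨0, by omega⟩) → ℝ) :
    (k : ℕ) → (hk : k ≤ n) → Fin G.n → Fin (a ⟨k, by omega⟩) → ℝ
  | 0, _ => χ
  | k + 1, hk => (Ls ⟨k, by omega⟩).eval G (chainEval a Ls G χ k (by omega))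

/-- Evaluation of the first `k` stages of the GFMT
`(L₁ | K₁); (L₂ ∥ K₂); …; (L_n ∥ K_n)`:  the first stage is the concatenation
of the GFMTs of the first layers, each further stage is the parallel composition
of the corresponding layers. -/
noncomputable def concatParChainEval {n : ℕ} (aL aK : Fin (n + 1) → ℕ)
    (Ls : ∀ i : Fin n, Layer (aL i.castSucc) (aL i.succ))
    (Ks : ∀ i : Fin n, Layer (aK i.castSucc) (aK i.succ))
    (G : FinGraph) (χL : Fin G.n → Fin (aL ⟨0, by omega⟩) → ℝ)
    (χK : Fin G.n → Fin (aK ⟨0, by omega⟩) → ℝ) :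
    (k : ℕ) → (h1 : 1 ≤ k) → (hk : k ≤ n) →
      Fin G.n → Fin (aL ⟨k, by omega⟩ + aK ⟨k, by omega⟩) → ℝ
  | 0, h1, _ => absurd h1 (by omega)
  | 1, _, hk => fun v =>
      Fin.append ((Ls ⟨0, by omega⟩).eval G χL v) ((Ks ⟨0, by omega⟩).eval G χK v)
  | k + 2, _, hk => fun v =>
      Fin.append
        ((Ls ⟨k + 1, by omega⟩).eval G
          (fun w i => concatParChainEval aL aK Ls Ks G χL χK (k + 1)
            (by omega) (by omega) w (Fin.castAdd _ i)) v)
        ((Ks ⟨k + 1, by omega⟩).eval G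
          (fun w i => concatParChainEval aL aK Ls Ks G χL χK (k + 1)
            (by omega) (by omega) w (Fin.natAdd _ i)) v)


theorem concatPar_key {n : ℕ} (aL aK : Fin (n + 1) → ℕ)
    (Ls : ∀ i : Fin n, Layer (aL i.castSucc) (aL i.succ))
    (Ks : ∀ i : Fin n, Layer (aK i.castSucc) (aK i.succ))
    (G : FinGraph) (χL : Fin G.n → Fin (aL ⟨0, by omega⟩) → ℝ)
    (χK : Fin G.n → Fin (aK ⟨0, by omega⟩) → ℝ) :
    ∀ (k : ℕ) (h1 : 1 ≤ k) (hk : k ≤ n),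
      concatParChainEval aL aK Ls Ks G χL χK k h1 hk
        = fun v => Fin.append (chainEval aL Ls G χL k hk v)
            (chainEval aK Ks G χK k hk v) := by
  intro k
  induction k with
  | zero => omega
  | succ k ih =>
    intro h1 hk
    match k, ih with
    | 0, _ =>
      rfl
    | m + 1, ih =>
      have hih := ih (by omega) (by omega)
      show concatParChainEval aL aK Ls Ks G χL χK (m + 2) _ _ = _
      rw [concatParChainEval]
      simp only [hih, Fin.append_left, Fin.append_right]
      rfl

/-- for two MPNNs `L = L₁; …; L_n` and `K = K₁; …; K_n` with
the same number `n ≥ 2` of layers and the same input arity, the concatenation of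
the GFMTs they express equals `(L₁ | K₁); (L₂ ∥ K₂); …; (L_n ∥ K_n)`. -/
theorem mpnn_concat_eq_concat_par_chain (n : ℕ) (hn : 2 ≤ n)
    (aL aK : Fin (n + 1) → ℕ) (h0 : aL ⟨0, by omega⟩ = aK ⟨0, by omega⟩)
    (Ls : ∀ i : Fin n, Layer (aL i.castSucc) (aL i.succ))
    (Ks : ∀ i : Fin n, Layer (aK i.castSucc) (aK i.succ))
    (G : FinGraph) (χ : Fin G.n → Fin (aL ⟨0, by omega⟩) → ℝ) (v : Fin G.n) :
    Fin.append (chainEval aL Ls G χ n le_rfl v)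
        (chainEval aK Ks G (fun w i => χ w (Fin.cast h0.symm i)) n le_rfl v)
      = concatParChainEval aL aK Ls Ks G χ
          (fun w i => χ w (Fin.cast h0.symm i)) n (by omega) le_rfl v := by
  rw [concatPar_key]
end
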